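/- Let G be an incomparability graph and k a natural number. Then the k-th power graph G^{*k} (same vertex set, edges between vertices at graph distance at most k in G) is also an incomparability graph. -/

import Mathlib

variable {V : Type*}

/-- `G` is an incomparability graph: there is a strict partial order on `V`
such that distinct vertices are adjacent iff incomparable. -/
def IsIncomparabilityGraph (G : SimpleGraph V) : Prop :=
  ∃ r : V → V → Prop, IsStrictOrder V r ∧
    ∀ x y, G.Adj x y ↔ (x ≠ y ∧ ¬ r x y ∧ ¬ r y x)

/-- The `k`-th power of `G`: distinct vertices adjacent iff at distance at most `k`. -/
def powerGraph (G : SimpleGraph V) (k : ℕ) : SimpleGraph V where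
  Adj x y := x ≠ y ∧ G.Reachable x y ∧ G.dist x y ≤ k
  symm := ⟨by
    rintro x y ⟨h1, h2, h3⟩
    exact ⟨h1.symm, h2.symm, by rwa [SimpleGraph.dist_comm]⟩⟩
  loopless := ⟨by rintro x ⟨h1, -⟩; exact h1 rfl⟩

theorem stmt6 (G : SimpleGraph V) (hG : IsIncomparabilityGraph G) (k : ℕ) :
    IsIncomparabilityGraph (powerGraph G k) := by
  obtain ⟨r, hr, hadj⟩ := hG
  haveI := hr
  rcases Nat.eq_zero_or_pos k with hk | hk
  · -- k = 0 : the power graph is empty, use a well-order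
    subst hk
    refine ⟨WellOrderingRel, inferInstance, fun x y => ?_⟩
    constructor
    · rintro ⟨hne, hreach, hd⟩
      exact absurd (hreach.dist_eq_zero_iff.mp (Nat.le_zero.mp hd)) hne
    · rintro ⟨hne, h1, h2⟩
      rcases trichotomous_of (WellOrderingRel (α := V)) x y with h | h | h
      · exact absurd h h1
      · exact absurd h hne
      · exact absurd h h2
  · -- k ≥ 1
    set r' : V → V → Prop := fun x y => r x y ∧ ¬ (powerGraph G k).Adj x y with hr'
    have hasymm : ∀ a b, r a b → r b a → False := fun a b h1 h2 =>
      irrefl_of r a (trans_of r h1 h2)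
    -- key lemma: walking from a to z with r a y, r y z, y far from z is impossible
    have key : ∀ (y z a : V) (p : G.Walk a z), r y z → ¬ (powerGraph G k).Adj y z →
        p.length ≤ k → r a y → False := by
      intro y z a p
      induction p with
      | nil =>
        intro hyz _ _ hzy
        exact hasymm _ _ hyz hzy
      | @cons a b z hab q ih =>
        intro hyz hPyz hlen hay
        simp only [SimpleGraph.Walk.length_cons] at hlen
        have hqk : q.length ≤ k := le_trans (Nat.le_succ _) hlen
        by_cases hby : b = y
        · subst hby
          exact hPyz ⟨fun h => irrefl_of r b (h ▸ hyz), q.reachable,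
            le_trans (SimpleGraph.dist_le q) hqk⟩
        · by_cases hrby : r b y
          · exact ih hyz hPyz hqk hrby
          · by_cases hryb : r y b
            · exact ((hadj a b).mp hab).2.1 (trans_of r hay hryb)
            · have hadjyb : G.Adj y b := (hadj y b).mpr ⟨Ne.symm hby, hryb, hrby⟩
              exact hPyz ⟨fun h => irrefl_of r y (h ▸ hyz),
                (SimpleGraph.Walk.cons hadjyb q).reachable,
                le_trans (SimpleGraph.dist_le (SimpleGraph.Walk.cons hadjyb q))
                  (by simpa using hlen)⟩
    haveI hirr : IsIrrefl V r' := ⟨fun a ha => irrefl_of r a ha.1⟩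
    haveI htr : IsTrans V r' := by
      refine ⟨fun x y z hxy hyz => ⟨trans_of r hxy.1 hyz.1, fun hPxz => ?_⟩⟩
      obtain ⟨hne, hreach, hd⟩ := hPxz
      obtain ⟨p, hp⟩ := hreach.exists_walk_length_eq_dist
      exact key y z x p hyz.1 hyz.2 (hp ▸ hd) hxy.1
    refine ⟨r', ⟨⟩, fun x y => ?_⟩
    · -- adjacency characterization
      constructor
      · intro hP
        have hPs : (powerGraph G k).Adj y x := hP.symm
        exact ⟨hP.1, fun h => h.2 hP, fun h => h.2 hPs⟩
      · rintro ⟨hne, h1, h2⟩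
        by_cases hP : (powerGraph G k).Adj x y
        · exact hP
        · have hP' : ¬ (powerGraph G k).Adj y x := fun h => hP h.symm
          have hrxy : ¬ r x y := fun h => h1 ⟨h, hP⟩
          have hryx : ¬ r y x := fun h => h2 ⟨h, hP'⟩
          have hGxy : G.Adj x y := (hadj x y).mpr ⟨hne, hrxy, hryx⟩
          exact ⟨hne, hGxy.reachable,
            le_trans (SimpleGraph.dist_le hGxy.toWalk) (by simp; omega)⟩
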